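/- arXiv:1111.1748 — 5 statements merged into one kernel-verified Lean document; each statement's English description precedes it below -/
import Mathlib

section
/- Let $\tilde X, \tilde Y, A$ be symmetric $N\times N$ real matrices such that $\begin{pmatrix} \tilde X & 0 \\ 0 & \tilde Y \end{pmatrix} \leq \begin{pmatrix} A & -A \\ -A & A\end{pmatrix}$. Then for every symmetric matrix $P$ with $0 \le P \le I$ and every $t \in [0,2]$, one has $\mathrm{tr}(\tilde X + \tilde Y) \leq 2t\, \mathrm{tr}(P A)$. -/
open Matrix

lemma psd_smul {n : ℕ} {M : Matrix (Fin n) (Fin n) ℝ} (hM : M.PosSemidef) {c : ℝ}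
    (hc : 0 ≤ c) : (c • M).PosSemidef := by
  refine Matrix.PosSemidef.of_dotProduct_mulVec_nonneg ?_ (fun x => ?_)
  · unfold Matrix.IsHermitian
    rw [conjTranspose_smul, hM.1]
    simp
  · have := hM.dotProduct_mulVec_nonneg x
    simp only [smul_mulVec, dotProduct_smul, smul_eq_mul]
    exact mul_nonneg hc this

lemma trace_nonneg_of_psd {n : ℕ} {M : Matrix (Fin n) (Fin n) ℝ} (hM : M.PosSemidef) :
    0 ≤ Matrix.trace M := by
  rw [Matrix.trace]
  apply Finset.sum_nonneg
  intro i _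
  have := hM.dotProduct_mulVec_nonneg (Pi.single i 1)
  simpa [Matrix.mulVec_single, dotProduct, Pi.single_apply, ite_mul] using this

open scoped MatrixOrder in
lemma trace_mul_nonneg_of_psd {n : ℕ} {A B : Matrix (Fin n) (Fin n) ℝ}
    (hA : A.PosSemidef) (hB : B.PosSemidef) : 0 ≤ Matrix.trace (A * B) := by
  have hs : CFC.sqrt B * CFC.sqrt B = B := CFC.sqrt_mul_sqrt_self B hB.nonneg
  have hpsd : ((CFC.sqrt B)ᴴ * A * CFC.sqrt B).PosSemidef := hA.conjTranspose_mul_mul_same (CFC.sqrt B)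
  rw [(CFC.sqrt_nonneg B).posSemidef.1] at hpsd
  have h0 : 0 ≤ Matrix.trace (CFC.sqrt B * A * CFC.sqrt B) := trace_nonneg_of_psd hpsd
  rwa [Matrix.trace_mul_comm, ← mul_assoc, hs, Matrix.trace_mul_comm] at h0

theorem stmt_1 {N : ℕ} (X Y A P : Matrix (Fin N) (Fin N) ℝ) (t : ℝ)
    (hX : X.IsSymm) (hY : Y.IsSymm) (hA : A.IsSymm) (hP : P.IsSymm)
    (h : (Matrix.fromBlocks A (-A) (-A) A - Matrix.fromBlocks X 0 0 Y).PosSemidef)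
    (hP0 : P.PosSemidef) (hP1 : ((1 : Matrix (Fin N) (Fin N) ℝ) - P).PosSemidef)
    (ht : t ∈ Set.Icc (0:ℝ) 2) :
    Matrix.trace (X + Y) ≤ 2 * t * Matrix.trace (P * A) := by
  obtain ⟨ht0, ht2⟩ := ht
  set S : Matrix (Fin N) (Fin N) ℝ := X + Y with hS
  -- Hermitian facts
  have hSh : S.IsHermitian := by
    unfold Matrix.IsHermitian
    rw [conjTranspose_add]
    simp only [conjTranspose_eq_transpose_of_trivial]
    rw [hX, hY]
  have hAh : A.IsHermitian := by
    unfold Matrix.IsHermitian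
    rw [conjTranspose_eq_transpose_of_trivial, hA]
  -- S ≤ 0
  have hSneg : (-S).PosSemidef := by
    refine Matrix.PosSemidef.of_dotProduct_mulVec_nonneg hSh.neg (fun v => ?_)
    have := h.dotProduct_mulVec_nonneg (Sum.elim v v)
    simp only [star_trivial, sub_mulVec, fromBlocks_mulVec, Sum.elim_comp_inl,
      Sum.elim_comp_inr, sumElim_dotProduct_sumElim, dotProduct_sub, dotProduct_add,
      neg_mulVec, zero_mulVec, dotProduct_neg, add_zero, zero_add] at this
    have hexp : v ⬝ᵥ ((-S) *ᵥ v) = -(v ⬝ᵥ X *ᵥ v) - v ⬝ᵥ Y *ᵥ v := by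
      simp [hS, neg_mulVec, add_mulVec, dotProduct_neg, dotProduct_add]
      ring
    simp only [star_trivial]
    rw [hexp]
    linarith
  -- S ≤ 4A
  have hS4A : ((4:ℝ) • A - S).PosSemidef := by
    have h4 : ((4:ℝ) • A).IsHermitian := by
      unfold Matrix.IsHermitian
      rw [conjTranspose_smul, hAh]; simp
    refine Matrix.PosSemidef.of_dotProduct_mulVec_nonneg (h4.sub hSh) (fun v => ?_)
    have := h.dotProduct_mulVec_nonneg (Sum.elim v (-v))
    simp only [star_trivial, sub_mulVec, fromBlocks_mulVec, Sum.elim_comp_inl,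
      Sum.elim_comp_inr, sumElim_dotProduct_sumElim, dotProduct_sub, dotProduct_add,
      neg_mulVec, mulVec_neg, zero_mulVec, dotProduct_neg, neg_dotProduct, neg_neg, dotProduct_zero,
      add_zero, zero_add] at this
    have hexp : v ⬝ᵥ (((4:ℝ) • A - S) *ᵥ v) = 4 * (v ⬝ᵥ A *ᵥ v) - v ⬝ᵥ X *ᵥ v - v ⬝ᵥ Y *ᵥ v := by
      simp [hS, sub_mulVec, add_mulVec, smul_mulVec, dotProduct_sub, dotProduct_add,
        dotProduct_smul, smul_eq_mul]
      ring
    simp only [star_trivial]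
    rw [hexp]
    linarith
  -- 1 - (t/2) • P is PSD
  have hQ : ((1 : Matrix (Fin N) (Fin N) ℝ) - (t/2) • P).PosSemidef := by
    have hrw : (1 : Matrix (Fin N) (Fin N) ℝ) - (t/2) • P
        = (1 - t/2) • (1 : Matrix (Fin N) (Fin N) ℝ)
          + (t/2) • ((1 : Matrix (Fin N) (Fin N) ℝ) - P) := by
      module
    rw [hrw]
    exact (psd_smul Matrix.PosSemidef.one (by linarith)).add (psd_smul hP1 (by linarith))
  have h1 : 0 ≤ Matrix.trace (((1 : Matrix (Fin N) (Fin N) ℝ) - (t/2) • P) * (-S)) :=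
    trace_mul_nonneg_of_psd hQ hSneg
  have h2 : 0 ≤ Matrix.trace (P * ((4:ℝ) • A - S)) :=
    trace_mul_nonneg_of_psd hP0 hS4A
  have e1 : Matrix.trace (((1 : Matrix (Fin N) (Fin N) ℝ) - (t/2) • P) * (-S))
      = -Matrix.trace S + (t/2) * Matrix.trace (P * S) := by
    rw [Matrix.sub_mul, Matrix.one_mul, Matrix.smul_mul]
    rw [Matrix.trace_sub, Matrix.trace_smul, Matrix.trace_neg, Matrix.mul_neg, Matrix.trace_neg]
    simp only [smul_eq_mul]
    ring
  have e2 : Matrix.trace (P * ((4:ℝ) • A - S))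
      = 4 * Matrix.trace (P * A) - Matrix.trace (P * S) := by
    rw [Matrix.mul_sub, Matrix.trace_sub, Matrix.mul_smul, Matrix.trace_smul]
    simp only [smul_eq_mul]
  rw [e1] at h1
  rw [e2] at h2
  -- combine
  nlinarith [mul_le_mul_of_nonneg_left h2 (by linarith : (0:ℝ) ≤ t/2)]
end

section
/- Let $\tilde X, \tilde Y, A, C$ be symmetric $N\times N$ real matrices with $\begin{pmatrix} \tilde X & 0 \\ 0 & \tilde Y \end{pmatrix} \leq \begin{pmatrix} A & -A \\ -A & A\end{pmatrix}$ and $A \le C$. Then for every $\tilde\lambda > 0$, every symmetric $P$ with $0 \le P \le I$, and all symmetric $\sigma_1, \sigma_2$, one has $\tilde\lambda\, \mathrm{tr}(\tilde X + \tilde Y) + \mathrm{tr}(\sigma_1^2 \tilde X + \sigma_2^2 \tilde Y) \leq 4\tilde\lambda\, \mathrm{tr}(PA) + \|\sigma_1 - \sigma_2\|^2 \sup_{|e|=1} |Ce\cdot e|$. -/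
open Matrix

lemma aux_trace_blocks {n : Type*} [Fintype n] {R : Type*} [AddCommMonoid R]
    (A B C D : Matrix n n R) :
    (fromBlocks A B C D).trace = A.trace + D.trace := by
  simp [Matrix.trace, Fintype.sum_sum_type, Matrix.diag]

lemma aux_psd_trace_nonneg {n : Type*} [Fintype n] [DecidableEq n] {M : Matrix n n ℝ}
    (hM : M.PosSemidef) : 0 ≤ M.trace := by
  rw [Matrix.trace]
  refine Finset.sum_nonneg fun i _ => ?_
  have := hM.dotProduct_mulVec_nonneg (Pi.single i 1)
  simpa [Matrix.diag, dotProduct, mulVec, Pi.single_apply, Finset.sum_ite_eq,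
    Finset.mul_sum] using this

lemma aux_tr_mul_nonneg {n : Type*} [Fintype n] [DecidableEq n] {A B : Matrix n n ℝ}
    (hA : A.PosSemidef) (hB : B.PosSemidef) : 0 ≤ (A * B).trace := by
  obtain ⟨S, hS, rfl⟩ : ∃ S : Matrix n n ℝ, S.IsHermitian ∧ S * S = A :=
    by open scoped MatrixOrder in exact ⟨CFC.sqrt A, (CFC.sqrt_nonneg A).posSemidef.isHermitian, CFC.sqrt_mul_sqrt_self A hA.nonneg⟩
  have h2 : (S * S * B).trace = (S * B * S).trace := by
    rw [Matrix.mul_assoc, Matrix.trace_mul_comm, Matrix.mul_assoc]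
  have h3 : (S * B * S).PosSemidef := by
    have := hB.conjTranspose_mul_mul_same S
    rwa [hS.eq] at this
  rw [h2]
  exact aux_psd_trace_nonneg h3

lemma aux_symm_herm {n : Type*} {M : Matrix n n ℝ} (h : M.IsSymm) : M.IsHermitian := by
  rw [Matrix.IsHermitian, conjTranspose_eq_transpose_of_trivial]; exact h

lemma aux_dot_symm {n : Type*} [Fintype n] (S : Matrix n n ℝ) (hS : S.IsSymm)
    (x y : n → ℝ) : y ⬝ᵥ S *ᵥ x = x ⬝ᵥ S *ᵥ y := by
  rw [Matrix.dotProduct_mulVec, ← Matrix.mulVec_transpose, hS.eq, dotProduct_comm]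

lemma aux_psd_smul {n : Type*} [Fintype n] {M : Matrix n n ℝ} (hM : M.PosSemidef)
    {c : ℝ} (hc : 0 ≤ c) : (c • M).PosSemidef := by
  refine Matrix.PosSemidef.of_dotProduct_mulVec_nonneg ?_ ?_
  · rw [Matrix.IsHermitian, conjTranspose_smul, hM.1.eq, star_trivial]
  · intro x
    rw [Matrix.smul_mulVec, dotProduct_smul, smul_eq_mul]
    exact mul_nonneg hc (hM.dotProduct_mulVec_nonneg x)

lemma aux_block_psd {n : Type*} [Fintype n] [DecidableEq n] (P : Matrix n n ℝ) (hP : P.IsSymm)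
    (hP0 : P.PosSemidef) (hP1 : ((1 : Matrix n n ℝ) - P).PosSemidef) :
    (fromBlocks (1 : Matrix n n ℝ) (1 - (P + P)) (1 - (P + P)) 1).PosSemidef := by
  have hR : ((1 : Matrix n n ℝ) - (P + P)).IsSymm := by
    rw [Matrix.IsSymm, transpose_sub, transpose_add, transpose_one, hP.eq]
  refine Matrix.PosSemidef.of_dotProduct_mulVec_nonneg ?_ ?_
  · exact aux_symm_herm (Matrix.IsSymm.fromBlocks isSymm_one hR isSymm_one)
  · intro x
    set x1 : n → ℝ := fun i => x (Sum.inl i) with hx1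
    set x2 : n → ℝ := fun i => x (Sum.inr i) with hx2
    have hx : x = Sum.elim x1 x2 := by funext i; cases i <;> rfl
    have e1 : 0 ≤ (x1 + x2) ⬝ᵥ ((1 - P) *ᵥ (x1 + x2)) := by
      simpa using hP1.dotProduct_mulVec_nonneg (x1 + x2)
    have e2 : 0 ≤ (x1 - x2) ⬝ᵥ (P *ᵥ (x1 - x2)) := by
      simpa using hP0.dotProduct_mulVec_nonneg (x1 - x2)
    have hcross : x2 ⬝ᵥ P *ᵥ x1 = x1 ⬝ᵥ P *ᵥ x2 := aux_dot_symm P hP x1 x2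
    rw [hx]
    simp only [star_trivial, fromBlocks_mulVec, Sum.elim_inl, Sum.elim_inr,
      sumElim_dotProduct_sumElim, Matrix.sub_mulVec, Matrix.add_mulVec,
      Matrix.one_mulVec, dotProduct_add, dotProduct_sub, add_dotProduct,
      sub_dotProduct, Matrix.mulVec_add, Matrix.mulVec_sub,
      Sum.elim_comp_inl, Sum.elim_comp_inr] at *
    have hc2 : x2 ⬝ᵥ x1 = x1 ⬝ᵥ x2 := dotProduct_comm _ _
    linarith

lemma aux_bdd_S {N : ℕ} (C : Matrix (Fin N) (Fin N) ℝ) :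
    BddAbove {r : ℝ | ∃ e : Fin N → ℝ, (∑ i, e i ^ 2) = 1 ∧ r = |C.mulVec e ⬝ᵥ e|} := by
  refine ⟨∑ i, ∑ j, |C i j|, ?_⟩
  rintro r ⟨e, he, rfl⟩
  have habs : ∀ i, |e i| ≤ 1 := by
    intro i
    have h1 : e i ^ 2 ≤ 1 := by
      rw [← he]
      exact Finset.single_le_sum (fun j _ => sq_nonneg (e j)) (Finset.mem_univ i)
    nlinarith [sq_abs (e i), abs_nonneg (e i)]
  calc |C.mulVec e ⬝ᵥ e| = |∑ i, (C.mulVec e) i * e i| := by rw [dotProduct]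
    _ ≤ ∑ i, |(C.mulVec e) i * e i| := Finset.abs_sum_le_sum_abs _ _
    _ ≤ ∑ i, ∑ j, |C i j| := by
        refine Finset.sum_le_sum fun i _ => ?_
        rw [abs_mul]
        calc |(C.mulVec e) i| * |e i| ≤ |(C.mulVec e) i| * 1 :=
              mul_le_mul_of_nonneg_left (habs i) (abs_nonneg _)
          _ = |∑ j, C i j * e j| := by rw [mul_one, Matrix.mulVec, dotProduct]
          _ ≤ ∑ j, |C i j * e j| := Finset.abs_sum_le_sum_abs _ _
          _ ≤ ∑ j, |C i j| := by
              refine Finset.sum_le_sum fun j _ => ?_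
              rw [abs_mul]
              calc |C i j| * |e j| ≤ |C i j| * 1 :=
                    mul_le_mul_of_nonneg_left (habs j) (abs_nonneg _)
                _ = |C i j| := mul_one _

lemma aux_vec_bound {N : ℕ} (C : Matrix (Fin N) (Fin N) ℝ) (v : Fin N → ℝ) :
    C.mulVec v ⬝ᵥ v ≤ (∑ j, v j ^ 2) *
      sSup {r : ℝ | ∃ e : Fin N → ℝ, (∑ i, e i ^ 2) = 1 ∧ r = |C.mulVec e ⬝ᵥ e|} := by
  set s := sSup {r : ℝ | ∃ e : Fin N → ℝ, (∑ i, e i ^ 2) = 1 ∧ r = |C.mulVec e ⬝ᵥ e|} with hs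
  set t := ∑ j, v j ^ 2 with ht
  have ht0 : 0 ≤ t := Finset.sum_nonneg fun j _ => sq_nonneg _
  rcases eq_or_lt_of_le ht0 with h0 | h0
  · have hv : v = 0 := by
      funext j
      have := (Finset.sum_eq_zero_iff_of_nonneg (fun j _ => sq_nonneg (v j))).1 h0.symm j
        (Finset.mem_univ j)
      exact pow_eq_zero_iff two_ne_zero |>.mp this
    simp [hv, ← h0]
  · set e := fun j => v j / Real.sqrt t with he
    have hsq : Real.sqrt t * Real.sqrt t = t := Real.mul_self_sqrt ht0
    have hst : (0:ℝ) < Real.sqrt t := Real.sqrt_pos.2 h0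
    have he1 : (∑ i, e i ^ 2) = 1 := by
      simp only [he, div_pow]
      rw [← Finset.sum_div, ← ht, sq, hsq]
      field_simp
    have hmem : |C.mulVec e ⬝ᵥ e| ∈
        {r : ℝ | ∃ e : Fin N → ℝ, (∑ i, e i ^ 2) = 1 ∧ r = |C.mulVec e ⬝ᵥ e|} := ⟨e, he1, rfl⟩
    have hle : |C.mulVec e ⬝ᵥ e| ≤ s := le_csSup (aux_bdd_S C) hmem
    have hdot : C.mulVec v ⬝ᵥ v = t * (C.mulVec e ⬝ᵥ e) := by
      have hev : v = Real.sqrt t • e := by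
        funext j
        simp only [he, Pi.smul_apply, smul_eq_mul]
        field_simp
      rw [hev, Matrix.mulVec_smul, smul_dotProduct, dotProduct_smul, smul_eq_mul, smul_eq_mul,
        ← mul_assoc, hsq]
    rw [hdot]
    calc t * (C.mulVec e ⬝ᵥ e) ≤ t * |C.mulVec e ⬝ᵥ e| :=
          mul_le_mul_of_nonneg_left (le_abs_self _) ht0
      _ ≤ t * s := mul_le_mul_of_nonneg_left hle ht0

lemma aux_col_trace {N : ℕ} (D C : Matrix (Fin N) (Fin N) ℝ) :
    (Dᵀ * C * D).trace = ∑ i, (C.mulVec (fun j => D j i)) ⬝ᵥ (fun j => D j i) := by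
  simp only [Matrix.trace, Matrix.diag, Matrix.mul_apply, Matrix.transpose_apply,
    Matrix.mulVec, dotProduct, Finset.sum_mul, Finset.mul_sum]
  refine Finset.sum_congr rfl fun i _ => ?_
  rw [Finset.sum_comm]
  refine Finset.sum_congr rfl fun j _ => Finset.sum_congr rfl fun k _ => by ring

lemma aux_trace_sq {N : ℕ} (D : Matrix (Fin N) (Fin N) ℝ) :
    (D * Dᵀ).trace = ∑ i, ∑ j, D j i ^ 2 := by
  simp only [Matrix.trace, Matrix.diag, Matrix.mul_apply, Matrix.transpose_apply, sq]
  exact Finset.sum_comm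

theorem stmt_4 {N : ℕ} (X Y A C P : Matrix (Fin N) (Fin N) ℝ) (lam : ℝ)
    (hX : X.IsSymm) (hY : Y.IsSymm) (hA : A.IsSymm) (hC : C.IsSymm) (hP : P.IsSymm)
    (h : (Matrix.fromBlocks A (-A) (-A) A - Matrix.fromBlocks X 0 0 Y).PosSemidef)
    (hAC : (C - A).PosSemidef)
    (hlam : 0 < lam)
    (hP0 : P.PosSemidef) (hP1 : ((1 : Matrix (Fin N) (Fin N) ℝ) - P).PosSemidef) :
    ∀ σ1 σ2 : Matrix (Fin N) (Fin N) ℝ, σ1.IsSymm → σ2.IsSymm →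
      lam * Matrix.trace (X + Y) + Matrix.trace (σ1 ^ 2 * X + σ2 ^ 2 * Y) ≤
        4 * lam * Matrix.trace (P * A) +
          Matrix.trace ((σ1 - σ2) * (σ1 - σ2)ᵀ) *
            sSup {r : ℝ | ∃ e : Fin N → ℝ, (∑ i, e i ^ 2) = 1 ∧ r = |C.mulVec e ⬝ᵥ e|} := by
  intro σ1 σ2 hs1 hs2
  set s := sSup {r : ℝ | ∃ e : Fin N → ℝ, (∑ i, e i ^ 2) = 1 ∧ r = |C.mulVec e ⬝ᵥ e|} with hsdef
  set D : Matrix (Fin N) (Fin N) ℝ := σ1 - σ2 with hDdef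
  have hDsym : D.IsSymm := by
    rw [Matrix.IsSymm, hDdef, transpose_sub, hs1.eq, hs2.eq]
  have hDt : Dᵀ = D := hDsym.eq
  -- D * D is PSD
  have hDD : (D * D).PosSemidef := by
    have := Matrix.posSemidef_conjTranspose_mul_self D
    rwa [conjTranspose_eq_transpose_of_trivial, hDt] at this
  -- trace (D*D*C) ≤ trace (D*Dᵀ) * s
  have hDC : (D * D * C).trace ≤ (D * Dᵀ).trace * s := by
    have hcyc : (Dᵀ * C * D).trace = (D * Dᵀ * C).trace := Matrix.trace_mul_cycle Dᵀ C D
    have h1 : (D * D * C).trace = (Dᵀ * C * D).trace := by rw [hcyc, hDt]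
    rw [h1, aux_col_trace]
    calc (∑ i, (C.mulVec (fun j => D j i)) ⬝ᵥ (fun j => D j i))
        ≤ ∑ i, (∑ j, D j i ^ 2) * s :=
          Finset.sum_le_sum fun i _ => aux_vec_bound C (fun j => D j i)
      _ = (∑ i, ∑ j, D j i ^ 2) * s := by rw [Finset.sum_mul]
      _ = (D * Dᵀ).trace * s := by rw [aux_trace_sq]
  -- trace (D*D*A) ≤ trace (D*D*C)
  have hDA : (D * D * A).trace ≤ (D * D * C).trace := by
    have h0 : 0 ≤ (D * D * (C - A)).trace := aux_tr_mul_nonneg hDD hAC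
    rw [Matrix.mul_sub, Matrix.trace_sub] at h0
    linarith
  -- the big test matrix
  set T : Matrix (Fin N ⊕ Fin N) (Fin N ⊕ Fin N) ℝ :=
    fromBlocks (lam • 1 + σ1*σ1) (lam • (1 - (P+P)) + σ1*σ2)
      (lam • (1 - (P+P)) + σ2*σ1) (lam • 1 + σ2*σ2) with hTdef
  have hTsplit : T = lam • fromBlocks (1 : Matrix (Fin N) (Fin N) ℝ) (1 - (P+P)) (1 - (P+P)) 1
      + (fromBlocks σ1 σ2 0 0)ᴴ * (fromBlocks σ1 σ2 0 0) := by
    rw [hTdef, conjTranspose_eq_transpose_of_trivial, fromBlocks_transpose, fromBlocks_multiply,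
      Matrix.fromBlocks_smul, ← fromBlocks_add]
    simp [hs1.eq, hs2.eq]
  have hT : T.PosSemidef := by
    rw [hTsplit]
    exact (aux_psd_smul (aux_block_psd P hP hP0 hP1) hlam.le).add
      (Matrix.posSemidef_conjTranspose_mul_self _)
  have key : 0 ≤ (T * (Matrix.fromBlocks A (-A) (-A) A - Matrix.fromBlocks X 0 0 Y)).trace :=
    aux_tr_mul_nonneg hT h
  have hM : Matrix.fromBlocks A (-A) (-A) A - Matrix.fromBlocks X 0 0 Y
      = fromBlocks (A - X) (-A) (-A) (A - Y) := by
    ext i j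
    cases i <;> cases j <;> simp [fromBlocks]
  rw [hM, hTdef, fromBlocks_multiply, aux_trace_blocks] at key
  have hkey : lam * (X.trace + Y.trace) + ((σ1*σ1*X).trace + (σ2*σ2*Y).trace)
      ≤ 4 * lam * (P * A).trace + (D * D * A).trace := by
    have hexp : (D * D * A).trace = (σ1*σ1*A).trace - (σ1*σ2*A).trace
        - (σ2*σ1*A).trace + (σ2*σ2*A).trace := by
      rw [hDdef]
      simp only [Matrix.sub_mul, Matrix.mul_sub, Matrix.trace_sub]
      ring
    rw [hexp]
    simp only [Matrix.add_mul, Matrix.mul_sub, Matrix.sub_mul, Matrix.mul_add,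
      Matrix.mul_neg, Matrix.neg_mul, Matrix.smul_mul, Matrix.one_mul,
      Matrix.trace_add, Matrix.trace_sub, Matrix.trace_neg, Matrix.trace_smul,
      smul_eq_mul] at key
    linarith
  have hgoal1 : Matrix.trace (X + Y) = X.trace + Y.trace := Matrix.trace_add X Y
  have hgoal2 : Matrix.trace (σ1 ^ 2 * X + σ2 ^ 2 * Y) = (σ1*σ1*X).trace + (σ2*σ2*Y).trace := by
    rw [Matrix.trace_add, sq, sq]
  rw [hgoal1, hgoal2]
  linarith
end

section
/- Let $A$ and $B$ be real symmetric positive definite $N\times N$ matrices with $A \ge \lambda' I$ and $B \ge \lambda' I$ for some $\lambda' > 0$. Then $\|\sqrt{A} - \sqrt{B}\| \le \frac{1}{2\sqrt{\lambda'}} \|A - B\|$, where $\|\cdot\|$ denotes the Hilbert–Schmidt norm and $\sqrt{A}$ denotes the unique symmetric positive definite square root of $A$. -/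
open Matrix

lemma psd_trace_nonneg {n : ℕ} {M : Matrix (Fin n) (Fin n) ℝ} (hM : M.PosSemidef) :
    0 ≤ M.trace := by
  rw [Matrix.trace]
  apply Finset.sum_nonneg
  intro i _
  have := (Matrix.posSemidef_iff_dotProduct_mulVec.mp hM).2 (Pi.single i 1)
  simpa [Matrix.mulVec_single, dotProduct, Pi.single_apply] using this

lemma sqrt_lower {n : ℕ} {c : ℝ} (hc : 0 < c) {S : Matrix (Fin n) (Fin n) ℝ}
    (hS : S.PosDef) (hQ : (S * S - (c ^ 2) • 1).PosSemidef) :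
    (S - c • 1).PosSemidef := by
  have hM : (S - c • 1).IsHermitian :=
    hS.1.sub (by simp [Matrix.IsHermitian])
  refine hM.posSemidef_iff_eigenvalues_nonneg.mpr fun i => ?_
  show 0 ≤ hM.eigenvalues i
  set μ := hM.eigenvalues i with hμ
  set v : Fin n → ℝ := ⇑(hM.eigenvectorBasis i) with hv
  have hvzero : v ≠ 0 := by
    have h0 := hM.eigenvectorBasis.orthonormal.ne_zero i
    intro h
    exact h0 (by ext j; exact congrFun h j)
  have h1 : (S - c • 1) *ᵥ v = μ • v := hM.mulVec_eigenvectorBasis i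
  have hSv : S *ᵥ v = (μ + c) • v := by
    have h2 : S *ᵥ v = (S - c • 1) *ᵥ v + (c • (1 : Matrix (Fin n) (Fin n) ℝ)) *ᵥ v := by
      rw [← Matrix.add_mulVec, sub_add_cancel]
    rw [h2, h1, Matrix.smul_mulVec, Matrix.one_mulVec]
    ext j; simp only [Pi.add_apply, Pi.smul_apply, smul_eq_mul]; ring
  have hp : 0 < v ⬝ᵥ v := by
    have hnn : 0 ≤ v ⬝ᵥ v :=
      Finset.sum_nonneg fun j _ => mul_self_nonneg _
    rcases hnn.eq_or_lt with h | h
    · exfalso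
      apply hvzero
      ext j
      have hzz : ∀ k ∈ Finset.univ, 0 ≤ v k * v k := fun k _ => mul_self_nonneg _
      have hz := (Finset.sum_eq_zero_iff_of_nonneg hzz).mp h.symm j (Finset.mem_univ j)
      exact mul_self_eq_zero.mp hz
    · exact h
  have hpos : 0 < (μ + c) * (v ⬝ᵥ v) := by
    have h3 := (Matrix.posDef_iff_dotProduct_mulVec.mp hS).2 hvzero
    rwa [star_trivial, hSv, dotProduct_smul, smul_eq_mul] at h3
  have hμc : 0 < μ + c := by nlinarith
  have hQv : (S * S - (c ^ 2) • 1) *ᵥ v = (μ * μ + 2 * c * μ) • v := by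
    have h4 : (S * S - (c ^ 2) • 1) *ᵥ v = (S * S) *ᵥ v - ((c ^ 2) • (1 : Matrix (Fin n) (Fin n) ℝ)) *ᵥ v := by
      rw [Matrix.sub_mulVec]
    rw [h4, ← Matrix.mulVec_mulVec, hSv, Matrix.mulVec_smul, hSv,
      Matrix.smul_mulVec, Matrix.one_mulVec]
    ext j; simp; ring
  have hQ2 : 0 ≤ (μ * μ + 2 * c * μ) * (v ⬝ᵥ v) := by
    have h5 := (Matrix.posSemidef_iff_dotProduct_mulVec.mp hQ).2 v
    rwa [star_trivial, hQv, dotProduct_smul, smul_eq_mul] at h5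
  nlinarith

theorem stmt_5 {N : ℕ} (lam' : ℝ) (hlam' : 0 < lam') (A B S T : Matrix (Fin N) (Fin N) ℝ)
    (hA : (A - lam' • 1).PosSemidef) (hB : (B - lam' • 1).PosSemidef)
    (hS : S.PosDef) (hT : T.PosDef) (hS2 : S * S = A) (hT2 : T * T = B) :
    Real.sqrt (Matrix.trace ((S - T) * (S - T)ᵀ)) ≤
      1 / (2 * Real.sqrt lam') * Real.sqrt (Matrix.trace ((A - B) * (A - B)ᵀ)) := by
  set c := Real.sqrt lam' with hcdef
  have hc : 0 < c := Real.sqrt_pos.mpr hlam'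
  have hc2 : c ^ 2 = lam' := Real.sq_sqrt hlam'.le
  have hSc : (S - c • 1).PosSemidef := sqrt_lower hc hS (by rw [hS2, hc2]; exact hA)
  have hTc : (T - c • 1).PosSemidef := sqrt_lower hc hT (by rw [hT2, hc2]; exact hB)
  set D := S - T with hD
  set E := A - B with hE
  have hDsym : Dᵀ = D := by
    have h1 : Sᵀ = S := by rw [← Matrix.conjTranspose_eq_transpose_of_trivial]; exact hS.1
    have h2 : Tᵀ = T := by rw [← Matrix.conjTranspose_eq_transpose_of_trivial]; exact hT.1
    rw [hD, Matrix.transpose_sub, h1, h2]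
  -- key identity : E = S*D + D*T
  have hEid : E = S * D + D * T := by
    rw [hE, hD, ← hS2, ← hT2]
    noncomm_ring
  set t := Matrix.trace (D * Dᵀ) with ht
  set u := Matrix.trace (E * Eᵀ) with hu
  have htnn : 0 ≤ t := by
    have : (D * Dᴴ).PosSemidef := Matrix.posSemidef_self_mul_conjTranspose D
    rw [Matrix.conjTranspose_eq_transpose_of_trivial] at this
    exact psd_trace_nonneg this
  have hunn : 0 ≤ u := by
    have : (E * Eᴴ).PosSemidef := Matrix.posSemidef_self_mul_conjTranspose E
    rw [Matrix.conjTranspose_eq_transpose_of_trivial] at this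
    exact psd_trace_nonneg this
  -- lower bound on trace (E * D)
  have hDSD : c * t ≤ Matrix.trace (D * S * D) := by
    have hps : (D * (S - c • 1) * Dᴴ).PosSemidef := hSc.mul_mul_conjTranspose_same D
    rw [Matrix.conjTranspose_eq_transpose_of_trivial, hDsym] at hps
    have h6 := psd_trace_nonneg hps
    have h7 : D * (S - c • 1) * D = D * S * D - c • (D * D) := by
      noncomm_ring
    rw [h7, Matrix.trace_sub, Matrix.trace_smul, smul_eq_mul, sub_nonneg] at h6
    rw [ht, hDsym]
    exact h6
  have hDTD : c * t ≤ Matrix.trace (D * T * D) := by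
    have hps : (D * (T - c • 1) * Dᴴ).PosSemidef := hTc.mul_mul_conjTranspose_same D
    rw [Matrix.conjTranspose_eq_transpose_of_trivial, hDsym] at hps
    have h6 := psd_trace_nonneg hps
    have h7 : D * (T - c • 1) * D = D * T * D - c • (D * D) := by
      noncomm_ring
    rw [h7, Matrix.trace_sub, Matrix.trace_smul, smul_eq_mul, sub_nonneg] at h6
    rw [ht, hDsym]
    exact h6
  have hED : 2 * c * t ≤ Matrix.trace (E * D) := by
    have : Matrix.trace (E * D) = Matrix.trace (D * S * D) + Matrix.trace (D * T * D) := by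
      rw [hEid, Matrix.add_mul, Matrix.trace_add]
      congr 1
      rw [Matrix.trace_mul_comm (S * D) D, Matrix.mul_assoc]
    rw [this]; linarith
  -- Cauchy-Schwarz
  have hCS : (Matrix.trace (E * D)) ^ 2 ≤ u * t := by
    have htr : ∀ (M P : Matrix (Fin N) (Fin N) ℝ),
        Matrix.trace (M * Pᵀ) = ∑ p : Fin N × Fin N, M p.1 p.2 * P p.1 p.2 := by
      intro M P
      rw [Fintype.sum_prod_type]
      simp [Matrix.trace, Matrix.diag, Matrix.mul_apply, Matrix.transpose_apply]
    have h8 : Matrix.trace (E * D) = ∑ p : Fin N × Fin N, E p.1 p.2 * D p.1 p.2 := by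
      conv_lhs => rw [← hDsym]
      exact htr E D
    have h9 := Finset.sum_mul_sq_le_sq_mul_sq Finset.univ
      (fun p : Fin N × Fin N => E p.1 p.2) (fun p : Fin N × Fin N => D p.1 p.2)
    rw [h8, hu, ht, htr E E, htr D D]
    calc (∑ p : Fin N × Fin N, E p.1 p.2 * D p.1 p.2) ^ 2
        ≤ (∑ p : Fin N × Fin N, E p.1 p.2 ^ 2) * (∑ p : Fin N × Fin N, D p.1 p.2 ^ 2) := h9
      _ = (∑ p : Fin N × Fin N, E p.1 p.2 * E p.1 p.2) * (∑ p : Fin N × Fin N, D p.1 p.2 * D p.1 p.2) := by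
          simp [sq]
  have h4c : 4 * c ^ 2 * t ≤ u := by
    rcases htnn.eq_or_lt with h | h
    · rw [← h]; simpa using hunn
    · have hEDnn : 0 ≤ Matrix.trace (E * D) := le_trans (by positivity) hED
      have h1 : (2 * c * t) ^ 2 ≤ (Matrix.trace (E * D)) ^ 2 :=
        pow_le_pow_left₀ (by positivity) hED 2
      by_contra hcon
      push_neg at hcon
      have h2 := mul_lt_mul_of_pos_right hcon h
      nlinarith [h1, hCS, h2]
  have hgoal : t ≤ u / (4 * c ^ 2) := by
    rw [le_div_iff₀ (by positivity)]
    linarith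
  calc Real.sqrt t ≤ Real.sqrt (u / (4 * c ^ 2)) := Real.sqrt_le_sqrt hgoal
    _ = Real.sqrt u / Real.sqrt (4 * c ^ 2) := by rw [Real.sqrt_div hunn]
    _ = 1 / (2 * c) * Real.sqrt u := by
        have : Real.sqrt (4 * c ^ 2) = 2 * c := by
          rw [show (4 : ℝ) * c ^ 2 = (2 * c) ^ 2 by ring, Real.sqrt_sq (by positivity)]
        rw [this]; ring
end

section
/- With $f$ defined as $f(r) = \frac{1}{4\lambda}\int_0^r e^{-G(\xi)/(4\lambda)} \int_\xi^\delta e^{G(\tau)/(4\lambda)}\,d\tau\,d\xi$ (where $G(\xi) = \int_0^\xi g$, $g \ge 0$ continuous and integrable on $(0,1)$, $\lambda > 0$, $\delta \in (0,1]$), the following estimates hold: (a) $f(r) \le f'(0)\,r$ for all $r \in [0,\delta]$; (b) $f'(0) \le \frac{\delta}{4\lambda} e^{\frac{1}{4\lambda}\int_0^1 g(s)\,ds}$; (c) $f(r) \ge \frac{\delta}{8\lambda} r$ for all $r \in [0,\delta]$, and in particular $f(\delta) \ge \frac{\delta^2}{8\lambda}$. -/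
open MeasureTheory intervalIntegral Set

theorem stmt_9 (lam δ : ℝ) (hlam : 0 < lam) (hδ : δ ∈ Set.Ioc (0:ℝ) 1)
    (g : ℝ → ℝ) (hg : ContinuousOn g (Set.Ioc 0 1))
    (hg0 : ∀ s ∈ Set.Ioc (0:ℝ) 1, 0 ≤ g s)
    (hgint : IntervalIntegrable g MeasureTheory.volume 0 1)
    (G f : ℝ → ℝ)
    (hG : ∀ ξ, G ξ = ∫ τ in (0:ℝ)..ξ, g τ)
    (hf : ∀ r, f r = (1 / (4 * lam)) *
      ∫ ξ in (0:ℝ)..r, Real.exp (-(G ξ) / (4 * lam)) * ∫ τ in ξ..δ, Real.exp (G τ / (4 * lam))) :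
    (∀ r ∈ Set.Icc (0:ℝ) δ,
      f r ≤ ((1 / (4 * lam)) * ∫ τ in (0:ℝ)..δ, Real.exp (G τ / (4 * lam))) * r) ∧
    ((1 / (4 * lam)) * ∫ τ in (0:ℝ)..δ, Real.exp (G τ / (4 * lam))) ≤
      δ / (4 * lam) * Real.exp ((1 / (4 * lam)) * ∫ s in (0:ℝ)..1, g s) ∧
    (∀ r ∈ Set.Icc (0:ℝ) δ, δ / (8 * lam) * r ≤ f r) ∧
    δ ^ 2 / (8 * lam) ≤ f δ := by
  obtain ⟨hδ0, hδ1⟩ := hδ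
  have hc : (0:ℝ) < 4 * lam := by linarith
  set E : ℝ → ℝ := fun τ => Real.exp (G τ / (4 * lam)) with hE
  set F : ℝ → ℝ := fun ξ => Real.exp (-(G ξ) / (4 * lam)) * ∫ τ in ξ..δ, E τ with hF
  -- integrability of g on subintervals of [0,1]
  have hsub : ∀ a b : ℝ, a ∈ Icc (0:ℝ) 1 → b ∈ Icc (0:ℝ) 1 →
      IntervalIntegrable g volume a b := by
    intro a b ha hb
    refine hgint.mono_set (uIcc_subset_uIcc ?_ ?_)
    · rw [uIcc_of_le zero_le_one]; exact ha
    · rw [uIcc_of_le zero_le_one]; exact hb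
  have h0ne : ∀ᵐ x : ℝ, x ≠ (0:ℝ) := by
    refine ae_iff.2 ?_
    simpa using (by simp : MeasureTheory.volume ({(0:ℝ)} : Set ℝ) = 0)
  -- monotonicity of G
  have hGmono : ∀ a b : ℝ, 0 ≤ a → a ≤ b → b ≤ 1 → G a ≤ G b := by
    intro a b ha hab hb1
    have ha1 : a ∈ Icc (0:ℝ) 1 := ⟨ha, hab.trans hb1⟩
    have hb : b ∈ Icc (0:ℝ) 1 := ⟨ha.trans hab, hb1⟩
    have hsplit : (∫ τ in (0:ℝ)..a, g τ) + ∫ τ in a..b, g τ = ∫ τ in (0:ℝ)..b, g τ :=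
      integral_add_adjacent_intervals (hsub 0 a ⟨le_rfl, zero_le_one⟩ ha1) (hsub a b ha1 hb)
    have hpos : 0 ≤ ∫ τ in a..b, g τ := by
      refine integral_nonneg_of_ae_restrict hab ?_
      filter_upwards [ae_restrict_mem measurableSet_Icc, ae_restrict_of_ae h0ne] with x hx hx0
      exact hg0 x ⟨lt_of_le_of_ne (ha.trans hx.1) (Ne.symm hx0), hx.2.trans hb1⟩
    rw [hG a, hG b]
    linarith
  have hG0 : G 0 = 0 := by rw [hG]; simp
  have hGnn : ∀ ξ : ℝ, 0 ≤ ξ → ξ ≤ 1 → 0 ≤ G ξ := by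
    intro ξ h1 h2
    have := hGmono 0 ξ le_rfl h1 h2
    linarith [hG0]
  -- continuity of G on [0,1]
  have hGcont : ContinuousOn G (Icc (0:ℝ) 1) := by
    have h1 : IntegrableOn g (uIcc (0:ℝ) 1) volume := by
      rw [uIcc_of_le zero_le_one]
      exact (intervalIntegrable_iff_integrableOn_Icc_of_le zero_le_one).mp hgint
    have h2 := intervalIntegral.continuousOn_primitive_interval h1
    rw [uIcc_of_le zero_le_one] at h2
    have hGe : G = fun x => ∫ t in (0:ℝ)..x, g t := funext hG
    rw [hGe]; exact h2
  have hEcont : ContinuousOn E (Icc (0:ℝ) 1) :=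
    Real.continuous_exp.comp_continuousOn (hGcont.div_const _)
  have hEint : ∀ a b : ℝ, a ∈ Icc (0:ℝ) 1 → b ∈ Icc (0:ℝ) 1 →
      IntervalIntegrable E volume a b := by
    intro a b ha hb
    refine (hEcont.mono ?_).intervalIntegrable
    refine (uIcc_subset_uIcc ?_ ?_).trans (by rw [uIcc_of_le zero_le_one]) <;>
      rw [uIcc_of_le zero_le_one]
    exacts [ha, hb]
  have hδI : δ ∈ Icc (0:ℝ) 1 := ⟨hδ0.le, hδ1⟩
  have h0I : (0:ℝ) ∈ Icc (0:ℝ) 1 := ⟨le_rfl, zero_le_one⟩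
  set C : ℝ := ∫ τ in (0:ℝ)..δ, E τ with hC
  -- H := fun ξ => ∫ τ in ξ..δ, E τ : properties
  have hHnn : ∀ ξ : ℝ, ξ ≤ δ → 0 ≤ ∫ τ in ξ..δ, E τ := fun ξ hξ =>
    integral_nonneg hξ (fun x _ => (Real.exp_pos _).le)
  have hHleC : ∀ ξ : ℝ, 0 ≤ ξ → ξ ≤ δ → (∫ τ in ξ..δ, E τ) ≤ C := by
    intro ξ h1 h2
    have hξI : ξ ∈ Icc (0:ℝ) 1 := ⟨h1, h2.trans hδ1⟩
    have hsplit : (∫ τ in (0:ℝ)..ξ, E τ) + ∫ τ in ξ..δ, E τ = C :=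
      integral_add_adjacent_intervals (hEint 0 ξ h0I hξI) (hEint ξ δ hξI hδI)
    have : 0 ≤ ∫ τ in (0:ℝ)..ξ, E τ :=
      integral_nonneg h1 (fun x _ => (Real.exp_pos _).le)
    linarith
  -- continuity of F on [0, δ]
  have hIccsub : Icc (0:ℝ) δ ⊆ Icc (0:ℝ) 1 := Icc_subset_Icc le_rfl hδ1
  have hFcont : ContinuousOn F (Icc (0:ℝ) δ) := by
    have h1 : ContinuousOn (fun ξ => Real.exp (-(G ξ) / (4 * lam))) (Icc (0:ℝ) δ) :=
      Real.continuous_exp.comp_continuousOn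
        (((hGcont.mono hIccsub).neg).div_const _)
    have h2 : ContinuousOn (fun ξ => ∫ τ in ξ..δ, E τ) (Icc (0:ℝ) δ) := by
      have h3 : IntegrableOn E (uIcc (0:ℝ) δ) volume := by
        rw [uIcc_of_le hδ0.le]
        exact (intervalIntegrable_iff_integrableOn_Icc_of_le hδ0.le).mp (hEint 0 δ h0I hδI)
      have h4 := intervalIntegral.continuousOn_primitive_interval_left h3
      rwa [uIcc_of_le hδ0.le] at h4
    exact h1.mul h2
  have hFint : ∀ r : ℝ, r ∈ Icc (0:ℝ) δ → IntervalIntegrable F volume 0 r := by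
    intro r hr
    refine (hFcont.mono ?_).intervalIntegrable
    rw [uIcc_of_le hr.1]
    exact Icc_subset_Icc le_rfl hr.2
  -- Part (a)
  have parta : ∀ r ∈ Set.Icc (0:ℝ) δ,
      f r ≤ ((1 / (4 * lam)) * C) * r := by
    intro r hr
    have hmono : (∫ ξ in (0:ℝ)..r, F ξ) ≤ ∫ _ξ in (0:ℝ)..r, C := by
      refine integral_mono_on hr.1 (hFint r hr) intervalIntegrable_const ?_
      intro x hx
      have hx1 : x ≤ δ := hx.2.trans hr.2
      have h1 : Real.exp (-(G x) / (4 * lam)) ≤ 1 := by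
        rw [Real.exp_le_one_iff]
        have h0 := hGnn x hx.1 (hx1.trans hδ1)
        rw [div_nonpos_iff]
        right
        exact ⟨by linarith, hc.le⟩
      calc F x ≤ 1 * (∫ τ in x..δ, E τ) :=
            mul_le_mul_of_nonneg_right h1 (hHnn x hx1)
        _ = ∫ τ in x..δ, E τ := one_mul _
        _ ≤ C := hHleC x hx.1 hx1
    rw [hf r]
    have h2 : (∫ _ξ in (0:ℝ)..r, C) = r * C := by simp
    calc (1 / (4 * lam)) * ∫ ξ in (0:ℝ)..r, F ξ
        ≤ (1 / (4 * lam)) * (r * C) := by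
          rw [← h2]
          exact mul_le_mul_of_nonneg_left hmono (by positivity)
      _ = ((1 / (4 * lam)) * C) * r := by ring
  -- Part (b)
  have partb : ((1 / (4 * lam)) * C) ≤
      δ / (4 * lam) * Real.exp ((1 / (4 * lam)) * ∫ s in (0:ℝ)..1, g s) := by
    have harg : (1 / (4 * lam)) * (∫ s in (0:ℝ)..1, g s) = G 1 / (4 * lam) := by
      rw [hG 1]; ring
    rw [harg]
    have hmono : C ≤ ∫ _τ in (0:ℝ)..δ, Real.exp (G 1 / (4 * lam)) := by
      refine integral_mono_on hδ0.le (hEint 0 δ h0I hδI) intervalIntegrable_const ?_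
      intro x hx
      exact Real.exp_le_exp.2 (div_le_div_of_nonneg_right
        (hGmono x 1 hx.1 (hx.2.trans hδ1) le_rfl) hc.le)
    have h2 : (∫ _τ in (0:ℝ)..δ, Real.exp (G 1 / (4 * lam))) =
        δ * Real.exp (G 1 / (4 * lam)) := by simp
    calc (1 / (4 * lam)) * C ≤ (1 / (4 * lam)) * (δ * Real.exp (G 1 / (4 * lam))) := by
          rw [← h2]; exact mul_le_mul_of_nonneg_left hmono (by positivity)
      _ = δ / (4 * lam) * Real.exp (G 1 / (4 * lam)) := by ring
  -- Part (c)
  have partc : ∀ r ∈ Set.Icc (0:ℝ) δ, δ / (8 * lam) * r ≤ f r := by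
    intro r hr
    have hptwise : ∀ x ∈ Icc (0:ℝ) r, δ - x ≤ F x := by
      intro x hx
      have hxδ : x ≤ δ := hx.2.trans hr.2
      have hx1 : x ≤ 1 := hxδ.trans hδ1
      have hH : (δ - x) * E x ≤ ∫ τ in x..δ, E τ := by
        have h := integral_mono_on hxδ _root_.intervalIntegrable_const
          (hEint x δ ⟨hx.1, hx1⟩ hδI)
          (fun τ hτ => Real.exp_le_exp.2 (div_le_div_of_nonneg_right
            (hGmono x τ hx.1 hτ.1 (hτ.2.trans hδ1)) hc.le))
        rwa [intervalIntegral.integral_const, smul_eq_mul] at h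
      have hkey : Real.exp (-(G x) / (4 * lam)) * ((δ - x) * E x) = δ - x := by
        rw [hE]
        rw [neg_div, Real.exp_neg]
        field_simp
      calc δ - x = Real.exp (-(G x) / (4 * lam)) * ((δ - x) * E x) := hkey.symm
        _ ≤ Real.exp (-(G x) / (4 * lam)) * ∫ τ in x..δ, E τ :=
            mul_le_mul_of_nonneg_left hH (Real.exp_pos _).le
        _ = F x := rfl
    have hmono : (∫ ξ in (0:ℝ)..r, (δ - ξ)) ≤ ∫ ξ in (0:ℝ)..r, F ξ := by
      refine integral_mono_on hr.1 ?_ (hFint r hr) hptwise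
      exact (_root_.intervalIntegrable_const).sub intervalIntegrable_id
    have hval : (∫ ξ in (0:ℝ)..r, (δ - ξ)) = δ * r - r ^ 2 / 2 := by
      rw [integral_sub _root_.intervalIntegrable_const intervalIntegrable_id,
        intervalIntegral.integral_const, integral_id, smul_eq_mul]
      ring
    have hr2 : r ^ 2 ≤ δ * r := by nlinarith [hr.1, hr.2]
    have hlow : δ * r / 2 ≤ ∫ ξ in (0:ℝ)..r, F ξ := by
      rw [hval] at hmono; linarith
    rw [hf r]
    calc δ / (8 * lam) * r = (1 / (4 * lam)) * (δ * r / 2) := by ring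
      _ ≤ (1 / (4 * lam)) * ∫ ξ in (0:ℝ)..r, F ξ :=
          mul_le_mul_of_nonneg_left hlow (by positivity)
  refine ⟨parta, partb, partc, ?_⟩
  have := partc δ ⟨hδ0.le, le_rfl⟩
  calc δ ^ 2 / (8 * lam) = δ / (8 * lam) * δ := by ring
    _ ≤ f δ := this
end

section
/- Let $\lambda > 0$ and let $g \in C((0,\infty);[0,\infty)) \cap L^1(0,1)$ satisfy $\int_0^{+\infty} e^{-\frac{1}{4\lambda}\int_0^r g(s)\,ds}\,dr = +\infty$. For $\delta > 0$ define $f_\delta(r) = \frac{1}{4\lambda}\int_0^r e^{-G(\xi)/(4\lambda)}\int_\xi^\delta e^{G(\tau)/(4\lambda)}\,d\tau\,d\xi$ where $G(\xi) = \int_0^\xi g$. Then for every fixed $\rho > 0$, $\lim_{\delta \to +\infty} \frac{f_\delta(\rho)}{f_\delta(\delta)} = 0$. -/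
open MeasureTheory intervalIntegral Set Filter

theorem stmt_15 (lam : ℝ) (hlam : 0 < lam) (g : ℝ → ℝ)
    (hg : ContinuousOn g (Set.Ioi 0)) (hg0 : ∀ s > (0:ℝ), 0 ≤ g s)
    (hgint : IntervalIntegrable g MeasureTheory.volume 0 1)
    (G : ℝ → ℝ) (hG : ∀ ξ, G ξ = ∫ τ in (0:ℝ)..ξ, g τ)
    (hdiv : Filter.Tendsto (fun R : ℝ => ∫ r in (0:ℝ)..R, Real.exp (-(G r) / (4 * lam)))
      Filter.atTop Filter.atTop)
    (F : ℝ → ℝ → ℝ)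
    (hF : ∀ δ r, F δ r = (1 / (4 * lam)) *
      ∫ ξ in (0:ℝ)..r, Real.exp (-(G ξ) / (4 * lam)) * ∫ τ in ξ..δ, Real.exp (G τ / (4 * lam))) :
    ∀ ρ > (0:ℝ), Filter.Tendsto (fun δ => F δ ρ / F δ δ) Filter.atTop (nhds 0) := by
  intro ρ hρ
  have hc : (0:ℝ) < 4 * lam := by linarith
  set φ : ℝ → ℝ := fun ξ => Real.exp (-(G ξ) / (4 * lam)) with hφdef
  set ψ : ℝ → ℝ := fun τ => Real.exp (G τ / (4 * lam)) with hψdef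
  -- integrability of g on [0,b] for b ≥ 0
  have hgi : ∀ b : ℝ, 0 ≤ b → IntervalIntegrable g volume 0 b := by
    intro b hb
    rcases le_total b 1 with h | h
    · exact hgint.mono_set (by
        rw [Set.uIcc_of_le hb, Set.uIcc_of_le zero_le_one]
        exact Set.Icc_subset_Icc le_rfl h)
    · refine hgint.trans ((hg.mono ?_).intervalIntegrable)
      rw [Set.uIcc_of_le h]
      intro x hx
      exact lt_of_lt_of_le one_pos hx.1
  -- differences of G
  have hGd : ∀ a b : ℝ, 0 ≤ a → 0 ≤ b → G b - G a = ∫ t in a..b, g t := by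
    intro a b ha hb
    rw [hG a, hG b]
    exact intervalIntegral.integral_interval_sub_left (hgi b hb) (hgi a ha)
  have hGmono : ∀ a b : ℝ, 0 ≤ a → a ≤ b → G a ≤ G b := by
    intro a b ha hab
    have hb : 0 ≤ b := le_trans ha hab
    have h1 : (0:ℝ) ≤ ∫ t in a..b, g t := by
      rw [intervalIntegral.integral_of_le hab]
      apply MeasureTheory.setIntegral_nonneg measurableSet_Ioc
      intro x hx
      exact hg0 x (lt_of_le_of_lt ha hx.1)
    have := hGd a b ha hb
    linarith
  have hG0 : G 0 = 0 := by rw [hG]; simp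
  have hGnn : ∀ x : ℝ, 0 ≤ x → 0 ≤ G x := by
    intro x hx; rw [← hG0]; exact hGmono 0 x le_rfl hx
  -- continuity of G on Ici 0
  have hGcont : ContinuousOn G (Set.Ici 0) := by
    intro x hx
    have hx1 : (0:ℝ) ≤ x + 1 := by simp at hx; linarith
    have hint : IntegrableOn g (Set.uIcc 0 (x+1)) volume := by
      rw [Set.uIcc_of_le hx1]
      exact (intervalIntegrable_iff_integrableOn_Icc_of_le hx1).mp (hgi (x+1) hx1)
    have hcont : ContinuousOn (fun y => ∫ t in (0:ℝ)..y, g t) (Set.uIcc 0 (x+1)) :=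
      intervalIntegral.continuousOn_primitive_interval hint
    have hcont' : ContinuousOn G (Set.uIcc 0 (x+1)) := by
      refine hcont.congr ?_
      intro y _; exact hG y
    have hmem : Set.uIcc 0 (x+1) ∈ nhdsWithin x (Set.Ici 0) := by
      rw [Set.uIcc_of_le hx1]
      have : Set.Icc 0 (x+1) = Set.Ici 0 ∩ Set.Iic (x+1) := by
        ext y; simp [Set.mem_Icc, and_comm]
      rw [this]
      exact Filter.inter_mem self_mem_nhdsWithin
        (mem_nhdsWithin_of_mem_nhds (Iic_mem_nhds (by simp at hx; linarith)))
    exact (hcont' x (by rw [Set.uIcc_of_le hx1]; exact ⟨hx, by simp at hx; linarith⟩)).mono_of_mem_nhdsWithin hmem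
  have hφcont : ContinuousOn φ (Set.Ici 0) :=
    Real.continuous_exp.comp_continuousOn ((hGcont.neg).div_const _)
  have hψcont : ContinuousOn ψ (Set.Ici 0) :=
    Real.continuous_exp.comp_continuousOn (hGcont.div_const _)
  have huIcc : ∀ a b : ℝ, 0 ≤ a → 0 ≤ b → Set.uIcc a b ⊆ Set.Ici 0 := by
    intro a b ha hb x hx
    have := hx.1
    simp only [inf_le_iff] at this
    rcases this with h | h
    · exact le_trans ha h
    · exact le_trans hb h
  have hφint : ∀ a b : ℝ, 0 ≤ a → 0 ≤ b → IntervalIntegrable φ volume a b := by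
    intro a b ha hb; exact (hφcont.mono (huIcc a b ha hb)).intervalIntegrable
  have hψint : ∀ a b : ℝ, 0 ≤ a → 0 ≤ b → IntervalIntegrable ψ volume a b := by
    intro a b ha hb; exact (hψcont.mono (huIcc a b ha hb)).intervalIntegrable
  set Φ : ℝ → ℝ := fun x => ∫ ξ in (0:ℝ)..x, φ ξ with hΦdef
  set Ψ : ℝ → ℝ := fun x => ∫ τ in (0:ℝ)..x, ψ τ with hΨdef
  have hdiv' : Tendsto Φ atTop atTop := hdiv
  -- Ψ monotone & nonneg on [0,∞)
  have hΨd : ∀ a b : ℝ, 0 ≤ a → 0 ≤ b → Ψ b - Ψ a = ∫ t in a..b, ψ t := by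
    intro a b ha hb
    exact intervalIntegral.integral_interval_sub_left (hψint 0 b le_rfl hb) (hψint 0 a le_rfl ha)
  have hψpos : ∀ τ : ℝ, 0 < ψ τ := fun τ => Real.exp_pos _
  have hΨmono : ∀ a b : ℝ, 0 ≤ a → a ≤ b → Ψ a ≤ Ψ b := by
    intro a b ha hab
    have h1 : (0:ℝ) ≤ ∫ t in a..b, ψ t :=
      intervalIntegral.integral_nonneg hab (fun u _ => (hψpos u).le)
    have := hΨd a b ha (le_trans ha hab)
    linarith
  have hΨnn : ∀ x : ℝ, 0 ≤ x → 0 ≤ Ψ x := by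
    intro x hx
    have : Ψ 0 = 0 := by simp [hΨdef]
    have := hΨmono 0 x le_rfl hx
    simp [hΨdef] at this ⊢
    simpa using this
  -- Ψ δ ≥ δ for δ ≥ 0
  have hΨge : ∀ δ : ℝ, 0 ≤ δ → δ ≤ Ψ δ := by
    intro δ hδ
    have h1 : ∫ t in (0:ℝ)..δ, (1:ℝ) ≤ ∫ t in (0:ℝ)..δ, ψ t := by
      apply intervalIntegral.integral_mono_on hδ intervalIntegrable_const
        (hψint 0 δ le_rfl hδ)
      intro x hx
      rw [hψdef]
      simp only
      rw [show (1:ℝ) = Real.exp 0 by simp]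
      exact Real.exp_le_exp.mpr (div_nonneg (hGnn x hx.1) hc.le)
    simpa using h1
  have hΨtop : Tendsto Ψ atTop atTop := by
    apply tendsto_atTop_mono' atTop _ tendsto_id
    filter_upwards [eventually_ge_atTop (0:ℝ)] with δ hδ
    exact hΨge δ hδ
  -- F representation via Ψ
  have hFrep : ∀ δ r : ℝ, 0 ≤ r → 0 ≤ δ →
      F δ r = (1 / (4 * lam)) * ∫ ξ in (0:ℝ)..r, φ ξ * (Ψ δ - Ψ ξ) := by
    intro δ r hr hδ
    rw [hF]
    congr 1
    apply intervalIntegral.integral_congr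
    intro ξ hξ
    rw [Set.uIcc_of_le hr] at hξ
    simp only
    congr 1
    rw [hΨd ξ δ hξ.1 hδ]
  -- integrand continuity / integrability
  have hint2 : ∀ δ r : ℝ, 0 ≤ r →
      IntervalIntegrable (fun ξ => φ ξ * (Ψ δ - Ψ ξ)) volume 0 r := by
    intro δ r hr
    apply ContinuousOn.intervalIntegrable
    apply ContinuousOn.mul (hφcont.mono (huIcc 0 r le_rfl hr))
    apply ContinuousOn.sub continuousOn_const
    have hint : IntegrableOn ψ (Set.uIcc 0 r) volume := by
      rw [Set.uIcc_of_le hr]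
      exact (intervalIntegrable_iff_integrableOn_Icc_of_le hr).mp (hψint 0 r le_rfl hr)
    exact intervalIntegral.continuousOn_primitive_interval hint
  have hint2' : ∀ δ a b : ℝ, 0 ≤ a → 0 ≤ b →
      IntervalIntegrable (fun ξ => φ ξ * (Ψ δ - Ψ ξ)) volume a b := by
    intro δ a b ha hb
    exact ((hint2 δ a ha).symm).trans (hint2 δ b hb)
  have hφnn : ∀ ξ : ℝ, 0 ≤ φ ξ := fun ξ => (Real.exp_pos _).le
  have hΦnn : ∀ r : ℝ, 0 ≤ r → 0 ≤ Φ r := by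
    intro r hr
    exact intervalIntegral.integral_nonneg hr (fun u _ => hφnn u)
  -- upper bound for numerator
  have hup : ∀ δ : ℝ, 0 ≤ δ → F δ ρ ≤ (1 / (4 * lam)) * (Φ ρ * Ψ δ) := by
    intro δ hδ
    rw [hFrep δ ρ hρ.le hδ]
    apply mul_le_mul_of_nonneg_left _ (by positivity)
    have h1 : ∫ ξ in (0:ℝ)..ρ, φ ξ * (Ψ δ - Ψ ξ) ≤ ∫ ξ in (0:ℝ)..ρ, φ ξ * Ψ δ := by
      apply intervalIntegral.integral_mono_on hρ.le (hint2 δ ρ hρ.le)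
        ((hφint 0 ρ le_rfl hρ.le).mul_const _)
      intro x hx
      apply mul_le_mul_of_nonneg_left _ (hφnn x)
      have := hΨnn x hx.1
      linarith
    calc ∫ ξ in (0:ℝ)..ρ, φ ξ * (Ψ δ - Ψ ξ) ≤ ∫ ξ in (0:ℝ)..ρ, φ ξ * Ψ δ := h1
      _ = Φ ρ * Ψ δ := intervalIntegral.integral_mul_const _ _
  -- nonnegativity of numerator
  have hFnn : ∀ δ : ℝ, ρ ≤ δ → 0 ≤ F δ ρ := by
    intro δ hδ
    have hδ0 : 0 ≤ δ := le_trans hρ.le hδ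
    rw [hFrep δ ρ hρ.le hδ0]
    apply mul_nonneg (by positivity)
    apply intervalIntegral.integral_nonneg hρ.le
    intro u hu
    apply mul_nonneg (hφnn u)
    have := hΨmono u δ hu.1 (le_trans hu.2 hδ)
    linarith
  -- lower bound for denominator
  have hlow : ∀ R δ : ℝ, 0 ≤ R → R ≤ δ →
      (1 / (4 * lam)) * (Φ R * (Ψ δ - Ψ R)) ≤ F δ δ := by
    intro R δ hR hRδ
    have hδ0 : 0 ≤ δ := le_trans hR hRδ
    rw [hFrep δ δ hδ0 hδ0]
    apply mul_le_mul_of_nonneg_left _ (by positivity)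
    have hsplit : ∫ ξ in (0:ℝ)..δ, φ ξ * (Ψ δ - Ψ ξ)
        = (∫ ξ in (0:ℝ)..R, φ ξ * (Ψ δ - Ψ ξ)) + ∫ ξ in R..δ, φ ξ * (Ψ δ - Ψ ξ) :=
      (intervalIntegral.integral_add_adjacent_intervals (hint2 δ R hR)
        (hint2' δ R δ hR hδ0)).symm
    have htail : (0:ℝ) ≤ ∫ ξ in R..δ, φ ξ * (Ψ δ - Ψ ξ) := by
      apply intervalIntegral.integral_nonneg hRδ
      intro u hu
      apply mul_nonneg (hφnn u)
      have := hΨmono u δ (le_trans hR hu.1) hu.2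
      linarith
    have hhead : Φ R * (Ψ δ - Ψ R) ≤ ∫ ξ in (0:ℝ)..R, φ ξ * (Ψ δ - Ψ ξ) := by
      have h1 : ∫ ξ in (0:ℝ)..R, φ ξ * (Ψ δ - Ψ R) ≤ ∫ ξ in (0:ℝ)..R, φ ξ * (Ψ δ - Ψ ξ) := by
        apply intervalIntegral.integral_mono_on hR ((hφint 0 R le_rfl hR).mul_const _)
          (hint2 δ R hR)
        intro x hx
        apply mul_le_mul_of_nonneg_left _ (hφnn x)
        have := hΨmono x R hx.1 hx.2
        linarith
      calc Φ R * (Ψ δ - Ψ R) = ∫ ξ in (0:ℝ)..R, φ ξ * (Ψ δ - Ψ R) :=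
            (intervalIntegral.integral_mul_const _ _).symm
        _ ≤ _ := h1
    linarith [hsplit, htail, hhead]
  -- main limit argument
  rw [NormedAddCommGroup.tendsto_nhds_zero]
  intro ε hε
  obtain ⟨R, hRM, hRρ⟩ : ∃ R : ℝ, max 1 (4 * Φ ρ / ε) ≤ Φ R ∧ ρ ≤ R :=
    ((hdiv'.eventually_ge_atTop (max 1 (4 * Φ ρ / ε))).and (eventually_ge_atTop ρ)).exists
  have hR0 : 0 ≤ R := le_trans hρ.le hRρ
  have hΦRpos : 0 < Φ R := lt_of_lt_of_le one_pos (le_trans (le_max_left _ _) hRM)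
  have hΦR4 : 4 * Φ ρ ≤ ε * Φ R := by
    have h1 : 4 * Φ ρ / ε ≤ Φ R := le_trans (le_max_right _ _) hRM
    rw [div_le_iff₀ hε] at h1
    linarith [h1]
  filter_upwards [hΨtop.eventually_ge_atTop (2 * Ψ R), eventually_ge_atTop (max R 1)]
    with δ hδΨ hδR
  have hδR' : R ≤ δ := le_trans (le_max_left _ _) hδR
  have hδ1 : (1:ℝ) ≤ δ := le_trans (le_max_right _ _) hδR
  have hδ0 : 0 ≤ δ := le_trans zero_le_one hδ1
  have hΨδpos : 0 < Ψ δ := lt_of_lt_of_le one_pos (le_trans hδ1 (hΨge δ hδ0))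
  have hhalf : Ψ δ / 2 ≤ Ψ δ - Ψ R := by linarith
  have hdenpos : 0 < (1 / (4 * lam)) * (Φ R * (Ψ δ - Ψ R)) := by
    apply mul_pos (by positivity)
    apply mul_pos hΦRpos
    linarith
  have hFδδpos : 0 < F δ δ := lt_of_lt_of_le hdenpos (hlow R δ hR0 hδR')
  have hratio : F δ ρ / F δ δ ≤ ((1 / (4 * lam)) * (Φ ρ * Ψ δ)) / ((1 / (4 * lam)) * (Φ R * (Ψ δ - Ψ R))) :=
    div_le_div₀ (mul_nonneg (by positivity) (mul_nonneg (hΦnn ρ hρ.le) hΨδpos.le))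
      (hup δ hδ0) hdenpos (hlow R δ hR0 hδR')
  have hcancel : ((1 / (4 * lam)) * (Φ ρ * Ψ δ)) / ((1 / (4 * lam)) * (Φ R * (Ψ δ - Ψ R)))
      = (Φ ρ * Ψ δ) / (Φ R * (Ψ δ - Ψ R)) :=
    mul_div_mul_left _ _ (by positivity)
  have hstep : (Φ ρ * Ψ δ) / (Φ R * (Ψ δ - Ψ R)) ≤ (Φ ρ * Ψ δ) / (Φ R * (Ψ δ / 2)) := by
    apply div_le_div_of_nonneg_left (mul_nonneg (hΦnn ρ hρ.le) hΨδpos.le)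
      (mul_pos hΦRpos (by linarith))
    apply mul_le_mul_of_nonneg_left hhalf hΦRpos.le
  have heq : (Φ ρ * Ψ δ) / (Φ R * (Ψ δ / 2)) = 2 * Φ ρ / Φ R := by
    field_simp
  have hfin : 2 * Φ ρ / Φ R ≤ ε / 2 := by
    rw [div_le_iff₀ hΦRpos]
    linarith
  have hratio2 : F δ ρ / F δ δ ≤ ε / 2 := by
    calc F δ ρ / F δ δ ≤ _ := hratio
      _ = _ := hcancel
      _ ≤ _ := hstep
      _ = _ := heq
      _ ≤ ε / 2 := hfin
  have hrnn : 0 ≤ F δ ρ / F δ δ := div_nonneg (hFnn δ (le_trans hRρ hδR')) hFδδpos.le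
  rw [Real.norm_eq_abs, abs_of_nonneg hrnn]
  linarith
end
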